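/- Let H₁ and H₂ be complex Hilbert spaces and J : B(H₁) → B(H₂) a surjective Jordan *-isomorphism. Then J is either an algebra *-isomorphism or an algebra *-antiisomorphism; in the first case there is a unitary w : H₁ → H₂ with J(b) = w b w* for all b ∈ B(H₁). -/

import Mathlib

set_option maxHeartbeats 1000000
set_option linter.unusedSectionVars false

open ContinuousLinearMap

local notation "⟪" x ", " y "⟫" => @inner ℂ _ _ x y

noncomputable def rk {H : Type*} [NormedAddCommGroup H] [InnerProductSpace ℂ H] (ξ η : H) :
    H →L[ℂ] H := (ContinuousLinearMap.toSpanSingleton ℂ ξ).comp (innerSL ℂ η)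

lemma rk_apply {H : Type*} [NormedAddCommGroup H] [InnerProductSpace ℂ H] (ξ η z : H) :
    rk ξ η z = ⟪η, z⟫ • ξ := rfl

lemma rank1_lemma {H : Type*} [NormedAddCommGroup H] [InnerProductSpace ℂ H]
    (u v : H →L[ℂ] H) (h : ∀ x : H →L[ℂ] H, u * x * v + v * x * u = 0) :
    u = 0 ∨ v = 0 := by
  by_cases hv : v = 0
  · exact Or.inr hv
  · left
    have hex : ∃ ζ, v ζ ≠ 0 := by
      by_contra hc; push_neg at hc
      exact hv (ContinuousLinearMap.ext fun z => by simp [hc])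
    obtain ⟨ζ, hζ⟩ := hex
    have key : ∀ ξ z : H, ⟪v ζ, v z⟫ • u ξ + ⟪v ζ, u z⟫ • v ξ = 0 := by
      intro ξ z
      have := congrArg (fun (t : H →L[ℂ] H) => t z) (h (rk ξ (v ζ)))
      simpa [ContinuousLinearMap.mul_apply, rk_apply, map_smul] using this
    have hvv : (⟪v ζ, v ζ⟫ : ℂ) ≠ 0 := by
      simpa [inner_self_eq_zero] using hζ
    have h0 : (⟪v ζ, u ζ⟫ : ℂ) = 0 := by
      have := congrArg (fun y => (⟪v ζ, y⟫ : ℂ)) (key ζ ζ)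
      simp only [inner_add_right, inner_smul_right, inner_zero_right] at this
      have h2 : (2 : ℂ) * (⟪v ζ, v ζ⟫ * ⟪v ζ, u ζ⟫) = 0 := by ring_nf; ring_nf at this; linear_combination this
      rcases mul_eq_zero.mp h2 with h | h
      · norm_num at h
      · rcases mul_eq_zero.mp h with h | h
        · exact absurd h hvv
        · exact h
    ext ξ
    have := key ξ ζ
    rw [h0, zero_smul, add_zero, smul_eq_zero] at this
    rcases this with h | h
    · exact absurd h hvv
    · simpa using h


section
variable {H₁ H₂ : Type*}
    [NormedAddCommGroup H₁] [InnerProductSpace ℂ H₁] [CompleteSpace H₁]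
    [NormedAddCommGroup H₂] [InnerProductSpace ℂ H₂] [CompleteSpace H₂]
    (J : (H₁ →L[ℂ] H₁) →ₗ[ℂ] (H₂ →L[ℂ] H₂))

lemma jordan_add (hJsq : ∀ b : H₁ →L[ℂ] H₁, J (b * b) = J b * J b)
    (a b : H₁ →L[ℂ] H₁) : J (a * b + b * a) = J a * J b + J b * J a := by
  have h := hJsq (a + b)
  have hexp : (a + b) * (a + b) = a * a + (a * b + b * a) + b * b := by noncomm_ring
  have h2 : (J a + J b) * (J a + J b)
      = J a * J a + (J a * J b + J b * J a) + J b * J b := by noncomm_ring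
  rw [hexp, map_add J (a * a + (a * b + b * a)) (b * b),
    map_add J (a * a) (a * b + b * a), hJsq a, hJsq b, map_add J a b, h2] at h
  exact add_left_cancel (add_right_cancel h)

lemma jordan_aba (hJsq : ∀ b : H₁ →L[ℂ] H₁, J (b * b) = J b * J b)
    (a b : H₁ →L[ℂ] H₁) : J (a * b * a) = J a * J b * J a := by
  have h1 := jordan_add J hJsq a (a * b + b * a)
  have h2 := jordan_add J hJsq a b
  have h3 := jordan_add J hJsq (a * a) b
  have hr : a * (a * b + b * a) + (a * b + b * a) * a
      = ((a * a) * b + b * (a * a)) + (2 : ℂ) • (a * b * a) := by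
    rw [two_smul]; noncomm_ring
  rw [hr, map_add J ((a*a)*b + b*(a*a)) ((2:ℂ) • (a*b*a)), map_smul, h3, h2] at h1
  have hr2 : J a * (J a * J b + J b * J a) + (J a * J b + J b * J a) * J a
      = (J (a*a) * J b + J b * J (a*a)) + (2 : ℂ) • (J a * J b * J a) := by
    rw [hJsq, two_smul]; noncomm_ring
  rw [hr2] at h1
  have := add_left_cancel h1
  exact smul_right_injective _ (two_ne_zero) this

lemma jordan_abc (hJsq : ∀ b : H₁ →L[ℂ] H₁, J (b * b) = J b * J b)
    (a b c : H₁ →L[ℂ] H₁) :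
    J (a * b * c + c * b * a) = J a * J b * J c + J c * J b * J a := by
  have h := jordan_aba J hJsq (a + c) b
  have hexp : (a + c) * b * (a + c) = a * b * a + (a * b * c + c * b * a) + c * b * c := by
    noncomm_ring
  have h2 : (J a + J c) * J b * (J a + J c)
      = J a * J b * J a + (J a * J b * J c + J c * J b * J a) + J c * J b * J c := by
    noncomm_ring
  rw [hexp, map_add J (a * b * a + (a * b * c + c * b * a)) (c * b * c),
    map_add J (a * b * a) (a * b * c + c * b * a), map_add J a c, h2,
    jordan_aba J hJsq a b, jordan_aba J hJsq c b] at h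
  exact add_left_cancel (add_right_cancel h)

lemma key_rel (hJbij : Function.Bijective J)
    (hJsq : ∀ b : H₁ →L[ℂ] H₁, J (b * b) = J b * J b)
    (a b : H₁ →L[ℂ] H₁) (x : H₂ →L[ℂ] H₂) :
    (J (a*b) - J a * J b) * x * (J (a*b) - J b * J a)
      + (J (a*b) - J b * J a) * x * (J (a*b) - J a * J b) = 0 := by
  obtain ⟨c, rfl⟩ := hJbij.2 x
  have hE2 : J (a*b) * J c * J (b*a) + J (b*a) * J c * J (a*b)
      = J a * J b * J c * (J b * J a) + J b * J a * J c * (J a * J b) := by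
    have h := jordan_abc J hJsq (a*b) c (b*a)
    have e1 : (a*b) * c * (b*a) = a * (b * c * b) * a := by noncomm_ring
    have e2 : (b*a) * c * (a*b) = b * (a * c * a) * b := by noncomm_ring
    rw [e1, e2, map_add J (a * (b*c*b) * a) (b * (a*c*a) * b),
      jordan_aba J hJsq a (b*c*b), jordan_aba J hJsq b (a*c*a),
      jordan_aba J hJsq b c, jordan_aba J hJsq a c] at h
    rw [← h]; noncomm_ring
  have hE1 : J (b*a) = J a * J b + J b * J a - J (a*b) := by
    have h := jordan_add J hJsq a b
    rw [map_add J (a*b) (b*a)] at h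
    rw [eq_sub_iff_add_eq, add_comm]
    exact h
  rw [hE1] at hE2
  have expand : (J (a*b) - J a * J b) * J c * (J (a*b) - J b * J a)
      + (J (a*b) - J b * J a) * J c * (J (a*b) - J a * J b)
      = (J a * J b * J c * (J b * J a) + J b * J a * J c * (J a * J b))
        - (J (a*b) * J c * (J a * J b + J b * J a - J (a*b))
          + (J a * J b + J b * J a - J (a*b)) * J c * J (a*b)) := by
    noncomm_ring
  rw [expand, ← hE2, sub_self]


lemma part1 (hJbij : Function.Bijective J)
    (hJsq : ∀ b : H₁ →L[ℂ] H₁, J (b * b) = J b * J b) :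
    (∀ a b : H₁ →L[ℂ] H₁, J (a * b) = J a * J b) ∨
      (∀ a b : H₁ →L[ℂ] H₁, J (a * b) = J b * J a) := by
  have dich : ∀ a b : H₁ →L[ℂ] H₁, J (a * b) = J a * J b ∨ J (a * b) = J b * J a := by
    intro a b
    have h := rank1_lemma (J (a*b) - J a * J b) (J (a*b) - J b * J a)
      (key_rel J hJbij hJsq a b)
    rcases h with h | h
    · exact Or.inl (sub_eq_zero.mp h)
    · exact Or.inr (sub_eq_zero.mp h)
  have stepA : ∀ a : H₁ →L[ℂ] H₁,
      (∀ b, J (a * b) = J a * J b) ∨ (∀ b, J (a * b) = J b * J a) := by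
    intro a
    by_contra hc
    push_neg at hc
    obtain ⟨⟨b₁, h1⟩, b₂, h2⟩ := hc
    have g1 : J (a * b₁) = J b₁ * J a := (dich a b₁).resolve_left h1
    have g2 : J (a * b₂) = J a * J b₂ := (dich a b₂).resolve_right h2
    have hsplit : J (a * (b₁ + b₂)) = J (a * b₁) + J (a * b₂) := by
      rw [mul_add, map_add]
    rcases dich a (b₁ + b₂) with h | h
    · rw [hsplit, map_add, mul_add, g2] at h
      exact h1 (add_right_cancel h)
    · rw [hsplit, map_add, add_mul, g1] at h
      exact h2 (add_left_cancel h)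
  by_contra hc
  push_neg at hc
  obtain ⟨⟨a₁, b₁, h1⟩, a₂, b₂, h2⟩ := hc
  have g1 : ∀ b, J (a₁ * b) = J b * J a₁ := by
    rcases stepA a₁ with h | h
    · exact absurd (h b₁) h1
    · exact h
  have g2 : ∀ b, J (a₂ * b) = J a₂ * J b := by
    rcases stepA a₂ with h | h
    · exact h
    · exact absurd (h b₂) h2
  rcases stepA (a₁ + a₂) with h | h
  · apply h1
    have := h b₁
    rw [add_mul, map_add, map_add, add_mul, g2 b₁] at this
    exact add_right_cancel this
  · apply h2
    have := h b₂
    rw [add_mul, map_add, map_add, mul_add, g1 b₂] at this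
    exact add_left_cancel this


lemma part2 (hJbij : Function.Bijective J)
    (hJstar : ∀ b : H₁ →L[ℂ] H₁, J (star b) = star (J b))
    (hmul : ∀ a b : H₁ →L[ℂ] H₁, J (a * b) = J a * J b) :
    ∃ w : H₁ →L[ℂ] H₂, (∀ x : H₁, ‖w x‖ = ‖x‖) ∧ Function.Surjective w ∧
      ∀ b : H₁ →L[ℂ] H₁, J b = w ∘L b ∘L (ContinuousLinearMap.adjoint w) := by
  by_cases hs : Subsingleton H₁
  · have hb0 : ∀ b : H₁ →L[ℂ] H₁, b = 0 := fun b => by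
      ext x; rw [Subsingleton.elim x 0]; simp
    have hH2 : ∀ y : H₂, y = 0 := by
      obtain ⟨c, hc⟩ := hJbij.2 (1 : H₂ →L[ℂ] H₂)
      have h1 : (1 : H₂ →L[ℂ] H₂) = 0 := by
        rw [← hc, hb0 c, map_zero]
      intro y
      calc y = (1 : H₂ →L[ℂ] H₂) y := rfl
        _ = (0 : H₂ →L[ℂ] H₂) y := by rw [h1]
        _ = 0 := rfl
    refine ⟨0, ?_, ?_, ?_⟩
    · intro x; rw [Subsingleton.elim x 0]; simp
    · intro y; exact ⟨0, (hH2 y).symm ▸ rfl⟩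
    · intro b
      rw [hb0 b, map_zero]
      ext x; simp
  · have : Nontrivial H₁ := not_subsingleton_iff_nontrivial.mp hs
    obtain ⟨x₀, hx₀⟩ := exists_ne (0 : H₁)
    set e₁ : H₁ := ((‖x₀‖⁻¹ : ℝ) : ℂ) • x₀ with he₁def
    have he₁ : ‖e₁‖ = 1 := by
      rw [he₁def, norm_smul, Complex.norm_real, norm_inv, norm_norm]
      field_simp [norm_ne_zero_iff.mpr hx₀]
    have he₁0 : e₁ ≠ 0 := by
      intro h; rw [h, norm_zero] at he₁; norm_num at he₁
    have hee : (⟪e₁, e₁⟫ : ℂ) = 1 := by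
      rw [inner_self_eq_norm_sq_to_K, he₁]; norm_num
    set T : H₁ → (H₁ →L[ℂ] H₁) := fun x => rk x e₁ with hT
    set p : H₁ →L[ℂ] H₁ := rk e₁ e₁ with hp
    have hpp : p * p = p := by
      ext z
      simp [hp, mul_apply, rk_apply, inner_smul_right, hee, he₁, smul_smul]
    have hp0 : p ≠ 0 := by
      intro h
      have h2 : p e₁ = 0 := by rw [h]; rfl
      rw [hp, rk_apply, hee, one_smul] at h2
      exact he₁0 h2
    set q : H₂ →L[ℂ] H₂ := J p with hq
    have hqq : q * q = q := by rw [hq, ← hmul, hpp]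
    have hq0 : q ≠ 0 := by
      intro h
      exact hp0 (hJbij.1 (show J p = J 0 by rw [map_zero]; exact h))
    obtain ⟨y₀, hy₀⟩ : ∃ y, q y ≠ 0 := by
      by_contra hc; push_neg at hc
      exact hq0 (ContinuousLinearMap.ext fun z => by simp [hc])
    set e₂ : H₂ := ((‖q y₀‖⁻¹ : ℝ) : ℂ) • q y₀ with he₂def
    have he₂ : ‖e₂‖ = 1 := by
      rw [he₂def, norm_smul, Complex.norm_real, norm_inv, norm_norm]
      field_simp [norm_ne_zero_iff.mpr hy₀]
    have hqe₂ : q e₂ = e₂ := by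
      rw [he₂def, map_smul]
      congr 1
      calc q (q y₀) = (q * q) y₀ := rfl
        _ = q y₀ := by rw [hqq]
    have he₂e₂ : (⟪e₂, e₂⟫ : ℂ) = 1 := by
      rw [inner_self_eq_norm_sq_to_K, he₂]; norm_num
    have hTadd : ∀ x y : H₁, T (x + y) = T x + T y := by
      intro x y; ext z; simp [hT, rk_apply, smul_add]
    have hTsmul : ∀ (c : ℂ) (x : H₁), T (c • x) = c • T x := by
      intro c x; ext z; simp [hT, rk_apply, smul_smul, mul_comm]
    have hTstar : ∀ x : H₁, star (T x) = rk e₁ x := by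
      intro x
      rw [star_eq_adjoint]
      symm
      rw [eq_adjoint_iff]
      intro z y
      simp only [hT, rk_apply, inner_smul_left, inner_smul_right, inner_conj_symm]
      ring
    have hTmulstar : ∀ x y : H₁, star (T x) * T y = (⟪x, y⟫ : ℂ) • p := by
      intro x y
      rw [hTstar]
      ext z
      simp [hT, hp, mul_apply, rk_apply, inner_smul_right, smul_smul, mul_comm]
    have hbT : ∀ (b : H₁ →L[ℂ] H₁) (x : H₁), b * T x = T (b x) := by
      intro b x; ext z; simp [hT, mul_apply, rk_apply, map_smul]
    set wlin : H₁ →ₗ[ℂ] H₂ :=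
      { toFun := fun x => J (T x) e₂
        map_add' := fun x y => by
          show J (T (x + y)) e₂ = J (T x) e₂ + J (T y) e₂
          rw [hTadd, map_add]; rfl
        map_smul' := fun c x => by
          show J (T (c • x)) e₂ = c • (J (T x) e₂)
          rw [hTsmul, map_smul]
          simp only [ContinuousLinearMap.smul_apply, he₂def, map_smul]
          rw [smul_comm] } with hwlin
    have hwlinapp : ∀ x : H₁, wlin x = J (T x) e₂ := fun x => rfl
    have hinner : ∀ x y : H₁, (⟪wlin x, wlin y⟫ : ℂ) = ⟪x, y⟫ := by
      intro x y
      have hkey : star (J (T x)) * J (T y) = (⟪x, y⟫ : ℂ) • q := by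
        rw [← hJstar, ← hmul, hTmulstar, map_smul, hq]
      calc (⟪wlin x, wlin y⟫ : ℂ) = ⟪J (T x) e₂, J (T y) e₂⟫ := rfl
        _ = ⟪e₂, adjoint (J (T x)) (J (T y) e₂)⟫ := (adjoint_inner_right _ _ _).symm
        _ = ⟪e₂, (star (J (T x)) * J (T y)) e₂⟫ := by rw [star_eq_adjoint]; rfl
        _ = ⟪e₂, ((⟪x, y⟫ : ℂ) • q) e₂⟫ := by rw [hkey]
        _ = (⟪x, y⟫ : ℂ) * ⟪e₂, e₂⟫ := by
            rw [smul_apply, hqe₂, inner_smul_right]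
        _ = ⟪x, y⟫ := by rw [he₂e₂, mul_one]
    have hnorm : ∀ x : H₁, ‖wlin x‖ = ‖x‖ := by
      intro x
      have h := hinner x x
      rw [inner_self_eq_norm_sq_to_K, inner_self_eq_norm_sq_to_K] at h
      have h2 : ‖wlin x‖ ^ 2 = ‖x‖ ^ 2 := by exact_mod_cast h
      nlinarith [norm_nonneg (wlin x), norm_nonneg x]
    set w : H₁ →L[ℂ] H₂ := wlin.mkContinuous 1 (fun x => by
      rw [one_mul]; exact le_of_eq (hnorm x)) with hw
    have hwapp : ∀ x : H₁, w x = J (T x) e₂ := fun x => rfl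
    have hwnorm : ∀ x : H₁, ‖w x‖ = ‖x‖ := fun x => hnorm x
    have hcomm : ∀ (b : H₁ →L[ℂ] H₁) (x : H₁), J b (w x) = w (b x) := by
      intro b x
      rw [hwapp, hwapp]
      calc J b (J (T x) e₂) = (J b * J (T x)) e₂ := rfl
        _ = J (b * T x) e₂ := by rw [← hmul]
        _ = J (T (b x)) e₂ := by rw [hbT]
    have hwe₁ : w e₁ = e₂ := by
      rw [hwapp]
      have h1 : T e₁ = p := rfl
      rw [h1, ← hq, hqe₂]
    have hsurj : Function.Surjective w := by
      intro y
      obtain ⟨c, hc⟩ := hJbij.2 (rk y e₂)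
      refine ⟨c e₁, ?_⟩
      rw [← hcomm c e₁, hwe₁, hc, rk_apply, he₂e₂, one_smul]
    have hadj : ∀ x : H₁, adjoint w (w x) = x := by
      intro x
      apply ext_inner_right ℂ
      intro z
      rw [adjoint_inner_left]
      exact hinner x z
    refine ⟨w, hwnorm, hsurj, ?_⟩
    intro b
    ext y
    obtain ⟨x, rfl⟩ := hsurj y
    rw [comp_apply, comp_apply, hadj, hcomm]


end

theorem stmtN
    {H₁ H₂ : Type*}
    [NormedAddCommGroup H₁] [InnerProductSpace ℂ H₁] [CompleteSpace H₁]
    [NormedAddCommGroup H₂] [InnerProductSpace ℂ H₂] [CompleteSpace H₂]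
    (J : (H₁ →L[ℂ] H₁) →ₗ[ℂ] (H₂ →L[ℂ] H₂))
    (hJbij : Function.Bijective J)
    (hJsq : ∀ b : H₁ →L[ℂ] H₁, J (b * b) = J b * J b)
    (hJstar : ∀ b : H₁ →L[ℂ] H₁, J (star b) = star (J b)) :
    ((∀ a b : H₁ →L[ℂ] H₁, J (a * b) = J a * J b) ∨
      (∀ a b : H₁ →L[ℂ] H₁, J (a * b) = J b * J a)) ∧
    ((∀ a b : H₁ →L[ℂ] H₁, J (a * b) = J a * J b) →
      ∃ w : H₁ →L[ℂ] H₂, (∀ x : H₁, ‖w x‖ = ‖x‖) ∧ Function.Surjective w ∧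
        ∀ b : H₁ →L[ℂ] H₁,
          J b = w ∘L b ∘L (ContinuousLinearMap.adjoint w)) := by
  exact ⟨part1 J hJbij hJsq, fun hmul => part2 J hJbij hJstar hmul⟩
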